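/- arXiv:0905.0796 — 3 statements merged into one kernel-verified Lean document; each statement's English description precedes it below -/
import Mathlib

section
/- Assume x† satisfies the source condition K*w = x† + ηξ for some w ∈ H, η > 0 and ξ ∈ ∂‖·‖_{ℓ¹}(x†), let ‖y^δ − y†‖ ≤ δ where Kx† = y†, and let β > 0 be determined by the discrepancy principle ‖Kx_{ηβ,β}^δ − y^δ‖ = δ. Then ‖x_{ηβ,β}^δ − x†‖_{ℓ²} ≤ 2‖w‖^{1/2} δ^{1/2}. If moreover x† has finite support, K has the finite basis injectivity property, and c₁, c₂ > 0 satisfy R_η(x) − R_η(x†) ≥ c₁‖x − x†‖_{ℓ²} − c₂‖K(x − x†)‖ for all x, then ‖x_{ηβ,β}^δ − x†‖_{ℓ²} ≤ (2c₂/c₁) δ. -/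
noncomputable section

open Filter Topology

/-- `ℓ²(ℕ, ℝ)`. -/
abbrev ltwo : Type := lp (fun _ : ℕ => ℝ) 2

/-- `x ∈ ℓ¹`. -/
def inL1 (x : ltwo) : Prop := Memℓp (fun i => x i) 1

/-- The `ℓ¹`-norm `‖x‖_{ℓ¹} = ∑ |xᵢ|` (junk value if `x ∉ ℓ¹`). -/
noncomputable def l1norm (x : ltwo) : ℝ := ∑' i, |x i|

/-- The elastic-net functional `Φ_{α,β}(x) = ½‖Kx − y‖² + α‖x‖₁ + (β/2)‖x‖₂²`,
real-valued on its effective domain `ℓ¹ ∩ ℓ²` (the convention `Φ = +∞` off `ℓ¹` is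
implemented by restricting all statements to `inL1`). -/
noncomputable def Phi {H : Type*} [NormedAddCommGroup H] [InnerProductSpace ℝ H]
    (K : ltwo →L[ℝ] H) (y : H) (α β : ℝ) (x : ltwo) : ℝ :=
  (1 / 2) * ‖K x - y‖ ^ 2 + α * l1norm x + (β / 2) * ‖x‖ ^ 2

/-- `x` is a minimizer of `Φ_{α,β}` over `ℓ²` (with the `+∞` convention off `ℓ¹`). -/
def IsMinimizer {H : Type*} [NormedAddCommGroup H] [InnerProductSpace ℝ H]
    (K : ltwo →L[ℝ] H) (y : H) (α β : ℝ) (x : ltwo) : Prop :=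
  inL1 x ∧ ∀ z : ltwo, inL1 z → Phi K y α β x ≤ Phi K y α β z


/-- The functional `R_η(x) = η‖x‖₁ + ½‖x‖₂²` (finite on `ℓ¹ ∩ ℓ²`). -/
noncomputable def Rfun (η : ℝ) (x : ltwo) : ℝ := η * l1norm x + (1 / 2) * ‖x‖ ^ 2

/-- `K` has the finite basis injectivity property. -/
def FBI {H : Type*} [NormedAddCommGroup H] [InnerProductSpace ℝ H]
    (K : ltwo →L[ℝ] H) : Prop :=
  ∀ I : Finset ℕ, ∀ u v : ltwo, K u = K v →
    (∀ i ∉ I, u i = 0) → (∀ i ∉ I, v i = 0) → u = v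

/-- Convergence rates for the discrepancy principle: under the source condition,
`‖x_{ηβ,β}^δ − x†‖₂ ≤ 2‖w‖^{1/2}δ^{1/2}`; if moreover `x†` is sparse, `K` has the
finite basis injectivity property and `R_η(x) − R_η(x†) ≥ c₁‖x − x†‖₂ − c₂‖K(x − x†)‖`,
then `‖x_{ηβ,β}^δ − x†‖₂ ≤ (2c₂/c₁)δ`. -/
theorem elasticNet_discrepancy_principle_rates
    {H : Type*} [NormedAddCommGroup H] [InnerProductSpace ℝ H] [CompleteSpace H]
    (K : ltwo →L[ℝ] H) (ydag ydelta : H) (δ : ℝ) (hδ : 0 < δ)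
    (xdag : ltwo) (hxdag1 : inL1 xdag) (hKxdag : K xdag = ydag)
    (hnoise : ‖ydelta - ydag‖ ≤ δ)
    (η : ℝ) (hη : 0 < η) (w : H) (ξ : ℕ → ℝ)
    (hξ1 : ∀ i, xdag i ≠ 0 → ξ i = Real.sign (xdag i))
    (hξ2 : ∀ i, |ξ i| ≤ 1)
    (hsource : ∀ i, (ContinuousLinearMap.adjoint K w) i = xdag i + η * ξ i)
    (β : ℝ) (hβ : 0 < β)
    (x : ltwo) (hx : IsMinimizer K ydelta (η * β) β x)
    (hdiscr : ‖K x - ydelta‖ = δ) :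
    ‖x - xdag‖ ≤ 2 * Real.sqrt ‖w‖ * Real.sqrt δ ∧
      ({i : ℕ | xdag i ≠ 0}.Finite → FBI K →
        ∀ c₁ c₂ : ℝ, 0 < c₁ → 0 < c₂ →
          (∀ z : ltwo, inL1 z →
            c₁ * ‖z - xdag‖ - c₂ * ‖K (z - xdag)‖ ≤ Rfun η z - Rfun η xdag) →
          ‖x - xdag‖ ≤ 2 * c₂ / c₁ * δ) := by
  obtain ⟨hx1, hmin⟩ := hx
  set d : ltwo := x - xdag with hd
  have hdcoe : ∀ i, d i = x i - xdag i := fun i => by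
    rw [hd]; exact congrFun (lp.coeFn_sub x xdag) i
  -- ‖K d‖ ≤ 2δ
  have hKd : ‖K d‖ ≤ 2 * δ := by
    have h1 : K d = (K x - ydelta) + (ydelta - ydag) := by
      rw [hd, map_sub, hKxdag]; abel
    calc ‖K d‖ = ‖(K x - ydelta) + (ydelta - ydag)‖ := by rw [h1]
      _ ≤ ‖K x - ydelta‖ + ‖ydelta - ydag‖ := norm_add_le _ _
      _ ≤ 2 * δ := by rw [hdiscr]; linarith
  -- R_η(x) ≤ R_η(x†)
  have hR : Rfun η x ≤ Rfun η xdag := by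
    have hm := hmin xdag hxdag1
    unfold Phi at hm
    have h1 : ‖K xdag - ydelta‖ ^ 2 ≤ δ ^ 2 := by
      have h2 : ‖K xdag - ydelta‖ ≤ δ := by
        rw [hKxdag, ← norm_neg]; simpa [neg_sub] using hnoise
      nlinarith [norm_nonneg (K xdag - ydelta)]
    rw [hdiscr] at hm
    have key : β * (η * l1norm x + (1 / 2) * ‖x‖ ^ 2)
        ≤ β * (η * l1norm xdag + (1 / 2) * ‖xdag‖ ^ 2) := by nlinarith
    have := (mul_le_mul_iff_of_pos_left hβ).mp key
    unfold Rfun; linarith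
  constructor
  · -- summabilities
    have hsx : Summable (fun i => |x i|) := by
      have := (memℓp_gen_iff (p := (1 : ENNReal))
        (by norm_num : (0:ℝ) < (1 : ENNReal).toReal)).mp hx1
      simpa using this
    have hsxdag : Summable (fun i => |xdag i|) := by
      have := (memℓp_gen_iff (p := (1 : ENNReal))
        (by norm_num : (0:ℝ) < (1 : ENNReal).toReal)).mp hxdag1
      simpa using this
    set Kw : ltwo := ContinuousLinearMap.adjoint K w with hKw
    have hS_inner : Summable (fun i => Kw i * d i) := by
      have := lp.summable_inner (𝕜 := ℝ) Kw d
      simpa [RCLike.inner_apply, mul_comm] using this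
    have hS_xd : Summable (fun i => xdag i * d i) := by
      have := lp.summable_inner (𝕜 := ℝ) xdag d
      simpa [RCLike.inner_apply, mul_comm] using this
    have hfeq : (fun i => ξ i * d i)
        = fun i => (Kw i * d i - xdag i * d i) / η := by
      funext i
      rw [hsource i]
      field_simp
      ring
    have hS_ξd : Summable (fun i => ξ i * d i) := by
      rw [hfeq]; exact (hS_inner.sub hS_xd).div_const η
    -- inner product identity
    have hinner1 : (inner ℝ (Kw) (d) : ℝ) = ∑' i, Kw i * d i := by
      rw [lp.inner_eq_tsum]; simp [RCLike.inner_apply, mul_comm]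
    have hinner2 : (inner ℝ (xdag) (d) : ℝ) = ∑' i, xdag i * d i := by
      rw [lp.inner_eq_tsum]; simp [RCLike.inner_apply, mul_comm]
    have hsplit : (inner ℝ (Kw) (d) : ℝ) = (inner ℝ (xdag) (d) : ℝ) + η * ∑' i, ξ i * d i := by
      rw [hinner1, hinner2, ← tsum_mul_left, ← Summable.tsum_add hS_xd (hS_ξd.mul_left η)]
      congr 1
      funext i
      rw [hsource i]
      ring
    -- ℓ¹ subgradient inequality
    have hsub : ∑' i, ξ i * d i ≤ l1norm x - l1norm xdag := by
      have hterm : ∀ i, ξ i * d i + |xdag i| ≤ |x i| := by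
        intro i
        have hξx : ξ i * xdag i = |xdag i| := by
          by_cases h : xdag i = 0
          · simp [h]
          · rw [hξ1 i h]
            rcases lt_or_gt_of_ne h with hlt | hgt
            · rw [Real.sign_of_neg hlt, abs_of_neg hlt]; ring
            · rw [Real.sign_of_pos hgt, abs_of_pos hgt]; ring
        have hb : ξ i * x i ≤ |x i| := by
          calc ξ i * x i ≤ |ξ i * x i| := le_abs_self _
            _ = |ξ i| * |x i| := abs_mul _ _
            _ ≤ 1 * |x i| := by
                exact mul_le_mul_of_nonneg_right (hξ2 i) (abs_nonneg _)
            _ = |x i| := one_mul _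
        rw [hdcoe i]
        nlinarith
      have hle : ∑' i, (ξ i * d i + |xdag i|) ≤ ∑' i, |x i| :=
        Summable.tsum_le_tsum hterm (hS_ξd.add hsxdag) hsx
      rw [Summable.tsum_add hS_ξd hsxdag] at hle
      unfold l1norm
      linarith
    -- Bregman estimate
    have hbreg : (1 / 2) * ‖d‖ ^ 2 ≤ Rfun η x - Rfun η xdag - (inner ℝ (Kw) (d) : ℝ) := by
      have hnsq : ‖d‖ ^ 2 = ‖x‖ ^ 2 - 2 * (inner ℝ (x) (xdag) : ℝ) + ‖xdag‖ ^ 2 := by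
        rw [hd]; exact norm_sub_sq_real x xdag
      have hxd : (inner ℝ (xdag) (d) : ℝ) = (inner ℝ (x) (xdag) : ℝ) - ‖xdag‖ ^ 2 := by
        rw [hd, inner_sub_right, real_inner_self_eq_norm_sq, real_inner_comm]
      rw [hsplit]
      unfold Rfun
      have := mul_le_mul_of_nonneg_left hsub hη.le
      nlinarith
    have hinnerK : (inner ℝ (Kw) (d) : ℝ) = (inner ℝ (w) (K d) : ℝ) := ContinuousLinearMap.adjoint_inner_left K d w
    have hlow : -(‖w‖ * (2 * δ)) ≤ (inner ℝ (Kw) (d) : ℝ) := by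
      rw [hinnerK]
      have h1 : |(inner ℝ (w) (K d) : ℝ)| ≤ ‖w‖ * ‖K d‖ := abs_real_inner_le_norm w (K d)
      have h2 : ‖w‖ * ‖K d‖ ≤ ‖w‖ * (2 * δ) :=
        mul_le_mul_of_nonneg_left hKd (norm_nonneg w)
      have := neg_abs_le ((inner ℝ (w) (K d) : ℝ))
      linarith
    have hfinal : ‖d‖ ^ 2 ≤ 4 * ‖w‖ * δ := by linarith
    have h4 : Real.sqrt (4 * ‖w‖ * δ) = 2 * Real.sqrt ‖w‖ * Real.sqrt δ := by
      rw [show (4 : ℝ) * ‖w‖ * δ = (2 * Real.sqrt ‖w‖ * Real.sqrt δ) ^ 2 by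
        rw [mul_pow, mul_pow, Real.sq_sqrt (norm_nonneg w), Real.sq_sqrt hδ.le]; ring]
      exact Real.sqrt_sq (by positivity)
    calc ‖d‖ = Real.sqrt (‖d‖ ^ 2) := (Real.sqrt_sq (norm_nonneg d)).symm
      _ ≤ Real.sqrt (4 * ‖w‖ * δ) := Real.sqrt_le_sqrt hfinal
      _ = 2 * Real.sqrt ‖w‖ * Real.sqrt δ := h4
  · intro _ _ c₁ c₂ hc₁ hc₂ hcc
    have h := hcc x hx1
    have h2 : c₁ * ‖d‖ ≤ c₂ * ‖K d‖ := by rw [hd]; linarith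
    rw [div_mul_eq_mul_div, le_div_iff₀ hc₁]
    nlinarith [mul_le_mul_of_nonneg_left hKd hc₂.le]
end
end

section
/- For α, β > 0, an element x ∈ ℓ² minimizes the elastic-net functional Φ_{α,β} if and only if βx = S_α(−K*(Kx − y)) componentwise, where S_α is the soft-shrinkage operator; equivalently, x = S_{α/β}(−K*(Kx − y)/β). -/
noncomputable section

open Filter Topology

/-- The scalar soft-shrinkage function `S_a(t) = sign(t)·max(|t| − a, 0)`. -/
noncomputable def soft (a t : ℝ) : ℝ := Real.sign t * max (|t| - a) 0

open RealInnerProductSpace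

/-! ### Scalar lemmas -/

lemma soft_eq_zero {a w : ℝ} (h : |w| ≤ a) : soft a w = 0 := by
  unfold soft; rw [max_eq_right (by linarith)]; ring

lemma soft_of_gt {a w : ℝ} (ha : 0 < a) (h : a < w) : soft a w = w - a := by
  unfold soft
  rw [Real.sign_of_pos (by linarith), abs_of_pos (by linarith), max_eq_left (by linarith)]; ring

lemma soft_of_lt {a w : ℝ} (ha : 0 < a) (h : w < -a) : soft a w = w + a := by
  unfold soft
  rw [Real.sign_of_neg (by linarith), abs_of_neg (by linarith), max_eq_left (by linarith)]; ring

lemma abs_soft_le {a t : ℝ} (ha : 0 < a) : |soft a t| ≤ t ^ 2 / (2 * a) := by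
  rcases le_or_gt (|t|) a with h | h
  · rw [soft_eq_zero h]; simp; positivity
  · rcases lt_trichotomy t 0 with ht | ht | ht
    · rw [abs_of_neg ht] at h
      rw [soft_of_lt ha (by linarith), abs_of_nonpos (by linarith),
        le_div_iff₀ (by linarith)]
      nlinarith [sq_nonneg (t + a)]
    · subst ht; simp at h; linarith
    · rw [abs_of_pos ht] at h
      rw [soft_of_gt ha h, abs_of_nonneg (by linarith), le_div_iff₀ (by linarith)]
      nlinarith [sq_nonneg (t - a)]

lemma soft_div {β : ℝ} (α w : ℝ) (hβ : 0 < β) : soft (α / β) (w / β) = soft α w / β := by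
  unfold soft
  have h1 : |w / β| - α / β = (|w| - α) / β := by
    rw [abs_div, abs_of_pos hβ]; ring
  have h2 : max ((|w| - α) / β) 0 = max (|w| - α) 0 / β := by
    rcases le_total (|w| - α) 0 with hc | hc
    · rw [max_eq_right hc, max_eq_right (div_nonpos_of_nonpos_of_nonneg hc hβ.le)]; simp
    · rw [max_eq_left hc, max_eq_left (div_nonneg hc hβ.le)]
  rcases lt_trichotomy w 0 with hw | hw | hw
  · rw [Real.sign_of_neg hw, Real.sign_of_neg (div_neg_of_neg_of_pos hw hβ), h1, h2]; ring
  · subst hw; simp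
  · rw [Real.sign_of_pos hw, Real.sign_of_pos (div_pos hw hβ), h1, h2]; ring

lemma soft_iff {α β : ℝ} (hα : 0 < α) (hβ : 0 < β) (s w : ℝ) :
    β * s = soft α w ↔ (|w - β * s| ≤ α ∧ (w - β * s) * s = α * |s|) := by
  rcases le_or_gt (|w|) α with h | h
  · rw [soft_eq_zero h]
    constructor
    · intro hs
      have : s = 0 := by nlinarith
      subst this; simpa using h
    · rintro ⟨h1, h2⟩
      have habs := abs_le.1 h
      rcases lt_trichotomy s 0 with hs | hs | hs
      · have : w - β * s = -α := by
          rw [abs_of_neg hs] at h2; field_simp at h2 ⊢; nlinarith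
        nlinarith
      · simp [hs]
      · have : w - β * s = α := by
          rw [abs_of_pos hs] at h2; nlinarith
        nlinarith
  · rcases lt_trichotomy w 0 with hw | hw | hw
    · rw [abs_of_neg hw] at h
      rw [soft_of_lt hα (by linarith)]
      constructor
      · intro hs
        have hs0 : s < 0 := by nlinarith
        have : w - β * s = -α := by rw [hs]; ring
        rw [this, abs_of_neg hs0]
        constructor
        · rw [abs_of_nonpos (by linarith)]; linarith
        · ring
      · rintro ⟨h1, h2⟩
        have habs := abs_le.1 h1
        rcases lt_trichotomy s 0 with hs | hs | hs
        · rw [abs_of_neg hs] at h2; nlinarith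
        · subst hs; simp at h2 ⊢; nlinarith [abs_le.1 h1]
        · rw [abs_of_pos hs] at h2; nlinarith
    · subst hw; simp at h; linarith
    · rw [abs_of_pos hw] at h
      rw [soft_of_gt hα h]
      constructor
      · intro hs
        have hs0 : 0 < s := by nlinarith
        have : w - β * s = α := by rw [hs]; ring
        rw [this, abs_of_pos hs0, abs_of_nonneg (by linarith)]
        exact ⟨le_refl _, rfl⟩
      · rintro ⟨h1, h2⟩
        have habs := abs_le.1 h1
        rcases lt_trichotomy s 0 with hs | hs | hs
        · rw [abs_of_neg hs] at h2; nlinarith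
        · subst hs; simp at h2 ⊢; nlinarith [abs_le.1 h1]
        · rw [abs_of_pos hs] at h2; nlinarith

lemma subgrad_iff {α : ℝ} (hα : 0 < α) (c s : ℝ) :
    (|c| ≤ α ∧ c * s = α * |s|) ↔ ∀ r : ℝ, α * |s| + c * (r - s) ≤ α * |r| := by
  constructor
  · rintro ⟨h1, h2⟩ r
    have h3 : c * r ≤ α * |r| :=
      (le_abs_self _).trans (by rw [abs_mul]; exact mul_le_mul_of_nonneg_right h1 (abs_nonneg r))
    nlinarith
  · intro h
    have e1 := h 0
    have e2 := h (2 * s)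
    rw [abs_zero] at e1
    rw [show |2 * s| = 2 * |s| by rw [abs_mul]; norm_num] at e2
    have hcs : c * s = α * |s| := by nlinarith
    have hp1 := h (s + 1)
    have hp2 := h (s - 1)
    have a1 : |s + 1| ≤ |s| + 1 := by simpa using abs_add_le s 1
    have a2 : |s - 1| ≤ |s| + 1 := by simpa using abs_sub s 1
    refine ⟨abs_le.2 ⟨by nlinarith, by nlinarith⟩, hcs⟩

lemma remove_quad {α c s C : ℝ} (hα : 0 ≤ α) (hC : 0 ≤ C)
    (h : ∀ t : ℝ, 0 ≤ c * t + α * (|s + t| - |s|) + C * t ^ 2) :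
    ∀ t : ℝ, 0 ≤ c * t + α * (|s + t| - |s|) := by
  intro t
  by_contra hneg
  push_neg at hneg
  set g := c * t + α * (|s + t| - |s|) with hg
  have key : ∀ l : ℝ, 0 < l → l ≤ 1 → 0 ≤ g + C * l * t ^ 2 := by
    intro l hl0 hl1
    have hconv : |s + l * t| ≤ (1 - l) * |s| + l * |s + t| := by
      calc |s + l * t| = |(1 - l) * s + l * (s + t)| := by ring_nf
        _ ≤ |(1 - l) * s| + |l * (s + t)| := abs_add_le _ _
        _ = (1 - l) * |s| + l * |s + t| := by
            rw [abs_mul, abs_mul, abs_of_nonneg (by linarith), abs_of_nonneg hl0.le]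
    have h1 := h (l * t)
    have h2 : 0 ≤ l * g + C * l ^ 2 * t ^ 2 := by nlinarith
    nlinarith
  have hd : 0 < 2 * C * t ^ 2 + 1 := by positivity
  set l : ℝ := min 1 (-g / (2 * C * t ^ 2 + 1)) with hl
  have hl0 : 0 < l := lt_min one_pos (div_pos (by linarith) hd)
  have hlle : l ≤ -g / (2 * C * t ^ 2 + 1) := min_le_right _ _
  have hk := key l hl0 (min_le_left _ _)
  have : C * l * t ^ 2 ≤ C * t ^ 2 * (-g) / (2 * C * t ^ 2 + 1) := by
    rw [div_eq_mul_inv] at hlle ⊢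
    nlinarith [sq_nonneg t, mul_le_mul_of_nonneg_left hlle (mul_nonneg hC (sq_nonneg t))]
  have h5 : 0 ≤ g + C * t ^ 2 * -g / (2 * C * t ^ 2 + 1) := by linarith
  have h6 : 0 ≤ g * (2 * C * t ^ 2 + 1) + C * t ^ 2 * -g := by
    have := mul_le_mul_of_nonneg_right h5 hd.le
    rw [zero_mul, add_mul, div_mul_cancel₀ _ hd.ne'] at this
    linarith
  nlinarith [mul_nonneg hC (sq_nonneg t)]

/-! ### lp helper lemmas -/

noncomputable def esingle (i : ℕ) : ltwo := lp.single 2 i (1:ℝ)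

lemma inL1_summable {x : ltwo} (h : inL1 x) : Summable fun i => |x i| := by
  have h1 : (0:ℝ) < (1 : ENNReal).toReal := by simp
  have := (memℓp_gen_iff h1).1 h
  simpa [Real.norm_eq_abs] using this

lemma inL1_of_summable {x : ltwo} (h : Summable fun i => |x i|) : inL1 x := by
  apply memℓp_gen
  simpa [Real.norm_eq_abs] using h

lemma summable_mul (f g : ltwo) : Summable fun i => f i * g i := by
  have := lp.summable_inner (𝕜 := ℝ) f g
  simpa [RCLike.inner_apply, mul_comm] using this

lemma inner_eq_tsum_mul (f g : ltwo) : ⟪f, g⟫ = ∑' i, f i * g i := by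
  rw [lp.inner_eq_tsum]
  simp [RCLike.inner_apply, mul_comm]

lemma single_coe (i : ℕ) (t : ℝ) (j : ℕ) :
    (t • esingle i) j = if j = i then t else 0 := by
  rw [lp.coeFn_smul, Pi.smul_apply]
  unfold esingle
  rw [lp.single_apply]
  by_cases h : j = i <;> simp [h, Pi.single_apply]

lemma norm_sq_single (i : ℕ) : ‖esingle i‖ ^ 2 = 1 := by
  rw [← real_inner_self_eq_norm_sq]
  unfold esingle
  rw [lp.inner_single_left]
  simp [RCLike.inner_apply, lp.single_apply, Pi.single_apply]

lemma inner_single (i : ℕ) (f : ltwo) : ⟪f, esingle i⟫ = f i := by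
  unfold esingle
  rw [lp.inner_single_right]
  simp [RCLike.inner_apply]

lemma inL1_add_single {x : ltwo} (hx : inL1 x) (i : ℕ) (t : ℝ) :
    inL1 (x + t • esingle i) := by
  apply inL1_of_summable
  have h1 := inL1_summable hx
  have h2 : Summable fun j => |x j| + |(if j = i then t else 0 : ℝ)| := by
    apply h1.add
    apply summable_of_ne_finset_zero (s := {i})
    intro j hj
    simp at hj
    simp [hj]
  apply h2.of_nonneg_of_le (fun j => abs_nonneg _)
  intro j
  rw [lp.coeFn_add, Pi.add_apply, single_coe]
  exact abs_add_le _ _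

lemma l1norm_add_single {x : ltwo} (hx : inL1 x) (i : ℕ) (t : ℝ) :
    l1norm (x + t • esingle i) = l1norm x + (|x i + t| - |x i|) := by
  unfold l1norm
  have key : ∀ j, |(x + t • esingle i) j|
      = |x j| + (if j = i then |x i + t| - |x i| else 0) := by
    intro j
    rw [lp.coeFn_add, Pi.add_apply, single_coe]
    by_cases h : j = i <;> simp [h]
  rw [tsum_congr key, Summable.tsum_add (inL1_summable hx)
    (summable_of_ne_finset_zero (s := {i}) (by intro j hj; simp at hj; simp [hj])),
    tsum_ite_eq]

lemma phi_expand {H : Type*} [NormedAddCommGroup H] [InnerProductSpace ℝ H]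
    (K : ltwo →L[ℝ] H) (y : H) (α β : ℝ) (x z : ltwo) :
    Phi K y α β z = Phi K y α β x + ⟪K x - y, K (z - x)⟫ + (1/2) * ‖K (z - x)‖ ^ 2
      + α * (l1norm z - l1norm x) + β * ⟪x, z - x⟫ + (β/2) * ‖z - x‖ ^ 2 := by
  have h1 : K z - y = (K x - y) + K (z - x) := by rw [map_sub]; abel
  have h2 : z = x + (z - x) := by abel
  have e1 : ‖K z - y‖ ^ 2
      = ‖K x - y‖ ^ 2 + 2 * ⟪K x - y, K (z - x)⟫ + ‖K (z - x)‖ ^ 2 := by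
    rw [h1, norm_add_sq_real]
  have e2 : ‖z‖ ^ 2 = ‖x‖ ^ 2 + 2 * ⟪x, z - x⟫ + ‖z - x‖ ^ 2 := by
    conv_lhs => rw [h2]
    rw [norm_add_sq_real]
  unfold Phi
  rw [e1, e2]
  ring

/-- Optimality condition for the elastic-net functional: `x` minimizes `Φ_{α,β}` if and
only if `βx = S_α(−K*(Kx − y))` componentwise; equivalently,
`x = S_{α/β}(−K*(Kx − y)/β)` componentwise. -/
theorem elasticNet_minimizer_iff_softShrinkage
    {H : Type*} [NormedAddCommGroup H] [InnerProductSpace ℝ H] [CompleteSpace H]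
    (K : ltwo →L[ℝ] H) (y : H) (α β : ℝ) (hα : 0 < α) (hβ : 0 < β) (x : ltwo) :
    (IsMinimizer K y α β x ↔
      ∀ i : ℕ, β * x i = soft α (-(ContinuousLinearMap.adjoint K (K x - y)) i)) ∧
    (IsMinimizer K y α β x ↔
      ∀ i : ℕ, x i = soft (α / β) (-(ContinuousLinearMap.adjoint K (K x - y)) i / β)) := by
  set u : ltwo := ContinuousLinearMap.adjoint K (K x - y) with hu
  have main : IsMinimizer K y α β x ↔ ∀ i : ℕ, β * x i = soft α (-(u i)) := by
    constructor
    · rintro ⟨hx, hmin⟩ i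
      -- the one-dimensional inequality
      have hineq : ∀ t : ℝ, 0 ≤ (u i + β * x i) * t + α * (|x i + t| - |x i|)
          + ((1/2) * ‖K (esingle i)‖ ^ 2 + β/2) * t ^ 2 := by
        intro t
        have hz := hmin (x + t • esingle i) (inL1_add_single hx i t)
        rw [phi_expand K y α β x (x + t • esingle i)] at hz
        rw [add_sub_cancel_left] at hz
        have hKe : ⟪K x - y, K (t • esingle i)⟫ = t * u i := by
          rw [map_smul, real_inner_smul_right]
          congr 1
          rw [← ContinuousLinearMap.adjoint_inner_left K (esingle i) (K x - y), ← hu]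
          exact inner_single i u
        have hxe : ⟪x, t • esingle i⟫ = t * x i := by
          rw [real_inner_smul_right, inner_single]
        have hn1 : ‖K (t • esingle i)‖ ^ 2 = t ^ 2 * ‖K (esingle i)‖ ^ 2 := by
          rw [map_smul, norm_smul, mul_pow, Real.norm_eq_abs, sq_abs]
        have hn2 : ‖t • esingle i‖ ^ 2 = t ^ 2 := by
          rw [norm_smul, mul_pow, Real.norm_eq_abs, sq_abs, norm_sq_single, mul_one]
        rw [hKe, hxe, hn1, hn2, l1norm_add_single hx] at hz
        nlinarith [hz]
      have hC : (0:ℝ) ≤ (1/2) * ‖K (esingle i)‖ ^ 2 + β/2 := by positivity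
      have h2 := remove_quad hα.le hC hineq
      have h3 : ∀ r : ℝ, α * |x i| + (-(u i + β * x i)) * (r - x i) ≤ α * |r| := by
        intro r
        have := h2 (r - x i)
        have he : x i + (r - x i) = r := by ring
        rw [he] at this
        linarith
      have h4 := (subgrad_iff hα (-(u i + β * x i)) (x i)).2 h3
      refine (soft_iff hα hβ (x i) (-(u i))).2 ?_
      constructor
      · have := h4.1
        rwa [show -(u i) - β * x i = -(u i + β * x i) by ring]
      · have := h4.2
        rwa [show -(u i) - β * x i = -(u i + β * x i) by ring]
    · intro hcond
      have hx : inL1 x := by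
        apply inL1_of_summable
        have hb : ∀ i, |x i| ≤ 1 / (2 * α * β) * (u i * u i) := by
          intro i
          have h1 : |β * x i| ≤ (-(u i)) ^ 2 / (2 * α) := by
            rw [hcond i]; exact abs_soft_le hα
          rw [abs_mul, abs_of_pos hβ, neg_pow] at h1
          rw [show 1 / (2 * α * β) * (u i * u i) = ((-1) ^ 2 * u i ^ 2 / (2 * α)) / β by ring,
            ← neg_pow]
          rw [le_div_iff₀ hβ, neg_pow]
          linarith [h1]
        exact ((summable_mul u u).mul_left (1 / (2 * α * β))).of_nonneg_of_le
          (fun i => abs_nonneg _) hb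
      refine ⟨hx, ?_⟩
      intro z hz
      rw [phi_expand K y α β x z]
      have hKz : ⟪K x - y, K (z - x)⟫ = ⟪u, z - x⟫ := by
        rw [hu, ContinuousLinearMap.adjoint_inner_left]
      have S1 : Summable fun i => α * |z i| := (inL1_summable hz).mul_left α
      have S2 : Summable fun i => α * |x i| := (inL1_summable hx).mul_left α
      have S3 := summable_mul u (z - x)
      have S4 : Summable fun i => β * (x i * ((z - x) i)) :=
        (summable_mul x (z - x)).mul_left β
      have hF0 : ∀ i, 0 ≤ α * |z i| - α * |x i| + (u i * ((z - x) i) + β * (x i * ((z - x) i))) := by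
        intro i
        have h4 := (soft_iff hα hβ (x i) (-(u i))).1 (hcond i)
        have h5 := (subgrad_iff hα (-(u i) - β * x i) (x i)).1 h4 (z i)
        have hzx : (z - x) i = z i - x i := by rw [lp.coeFn_sub, Pi.sub_apply]
        rw [hzx]
        nlinarith [h5]
      have htsum : (0:ℝ) ≤ (∑' i, α * |z i|) - (∑' i, α * |x i|)
          + ((∑' i, u i * ((z - x) i)) + ∑' i, β * (x i * ((z - x) i))) := by
        rw [← Summable.tsum_sub S1 S2, ← Summable.tsum_add S3 S4, ← Summable.tsum_add (S1.sub S2) (S3.add S4)]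
        exact tsum_nonneg hF0
      have e1 : (∑' i, α * |z i|) = α * l1norm z := by
        rw [tsum_mul_left]; rfl
      have e2 : (∑' i, α * |x i|) = α * l1norm x := by
        rw [tsum_mul_left]; rfl
      have e3 : (∑' i, u i * ((z - x) i)) = ⟪u, z - x⟫ := (inner_eq_tsum_mul u (z - x)).symm
      have e4 : (∑' i, β * (x i * ((z - x) i))) = β * ⟪x, z - x⟫ := by
        rw [tsum_mul_left, inner_eq_tsum_mul]
      rw [e1, e2, e3, e4] at htsum
      rw [hKz]
      nlinarith [sq_nonneg ‖K (z - x)‖, sq_nonneg ‖z - x‖, htsum]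
  constructor
  · exact main
  · rw [main]
    apply forall_congr'
    intro i
    rw [soft_div α (-(u i)) hβ]
    constructor
    · intro h
      rw [← h]
      field_simp
    · intro h
      rw [h]
      field_simp
end
end

section
/- Let β > 0 and let A ⊂ ℕ be any subset, with P_A : ℓ² → ℓ² the coordinate projection onto the components in A. Then the bounded operator D = β·Id + P_A K*K (i.e., (Df)|_A = β f|_A + (K*K f)|_A and (Df)|_{A^c} = β f|_{A^c}) is boundedly invertible, and ‖D^{-1}‖ ≤ β^{-1}(2 + β^{-1}‖K*K‖); in particular the bound is uniform over all subsets A. -/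
noncomputable section

open Filter Topology RealInnerProductSpace

set_option maxHeartbeats 1000000 in
/-- For any subset `A ⊆ ℕ` and `β > 0`, the operator `D = β·Id + P_A K*K` (where `P_A`
is the coordinate projection onto the components in `A`) is boundedly invertible with
`‖D⁻¹‖ ≤ β⁻¹(2 + β⁻¹‖K*K‖)`; in particular the bound is uniform in `A`. -/
theorem ssn_newton_matrix_invertible
    {H : Type*} [NormedAddCommGroup H] [InnerProductSpace ℝ H] [CompleteSpace H]
    (K : ltwo →L[ℝ] H) (β : ℝ) (hβ : 0 < β) (A : Set ℕ)
    (P : ltwo →L[ℝ] ltwo)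
    (hPmem : ∀ (f : ltwo), ∀ i ∈ A, P f i = f i)
    (hPnotmem : ∀ (f : ltwo), ∀ i ∉ A, P f i = 0) :
    ∃ Dinv : ltwo →L[ℝ] ltwo,
      Dinv.comp (β • ContinuousLinearMap.id ℝ ltwo +
          P.comp ((ContinuousLinearMap.adjoint K).comp K)) =
        ContinuousLinearMap.id ℝ ltwo ∧
      (β • ContinuousLinearMap.id ℝ ltwo +
          P.comp ((ContinuousLinearMap.adjoint K).comp K)).comp Dinv =
        ContinuousLinearMap.id ℝ ltwo ∧
      ‖Dinv‖ ≤ β⁻¹ * (2 + β⁻¹ * ‖(ContinuousLinearMap.adjoint K).comp K‖) := by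
  classical
  set T : ltwo →L[ℝ] ltwo := (ContinuousLinearMap.adjoint K).comp K with hTdef
  -- P is idempotent
  have hPP : ∀ f : ltwo, P (P f) = P f := by
    intro f
    apply lp.ext
    funext i
    by_cases hi : i ∈ A
    · rw [hPmem _ i hi]
    · rw [hPnotmem _ i hi, hPnotmem _ i hi]
  -- P is self-adjoint
  have hPsa : ∀ f g : ltwo, ⟪P f, g⟫ = ⟪f, P g⟫ := by
    intro f g
    rw [lp.inner_eq_tsum, lp.inner_eq_tsum]
    congr 1
    funext i
    by_cases hi : i ∈ A
    · rw [hPmem f i hi, hPmem g i hi]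
    · rw [hPnotmem f i hi, hPnotmem g i hi]
      simp
  -- T is positive semidefinite
  have hTpos : ∀ x : ltwo, 0 ≤ ⟪T x, x⟫ := by
    intro x
    have : ⟪T x, x⟫ = ⟪K x, K x⟫ := by
      simp [hTdef, ContinuousLinearMap.comp_apply, ContinuousLinearMap.adjoint_inner_left]
    rw [this]
    exact real_inner_self_nonneg
  set S : ltwo →L[ℝ] ltwo := P.comp (T.comp P) with hSdef
  set M : ltwo →L[ℝ] ltwo := β • ContinuousLinearMap.id ℝ ltwo + S with hMdef
  have hMapp : ∀ x : ltwo, M x = β • x + P (T (P x)) := by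
    intro x; simp [hMdef, hSdef]
  have hSpos : ∀ x : ltwo, 0 ≤ ⟪S x, x⟫ := by
    intro x
    have : ⟪S x, x⟫ = ⟪T (P x), P x⟫ := by
      have := hPsa (T (P x)) x
      simpa [hSdef, hPP] using this
    rw [this]; exact hTpos (P x)
  have hMcoer : ∀ x : ltwo, β * ‖x‖ * ‖x‖ ≤ ⟪M x, x⟫ := by
    intro x
    have h1 : ⟪M x, x⟫ = β * ⟪x, x⟫ + ⟪S x, x⟫ := by
      rw [hMapp]
      have : P (T (P x)) = S x := by simp [hSdef]
      rw [this, inner_add_left, real_inner_smul_left]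
    rw [h1, real_inner_self_eq_norm_mul_norm]
    nlinarith [hSpos x]
  -- invert M via Lax–Milgram
  set B : ltwo →L[ℝ] ltwo →L[ℝ] ℝ := (innerSL ℝ).comp M with hBdef
  have hBapp : ∀ x y : ltwo, B x y = ⟪M x, y⟫ := by intro x y; rfl
  have hcoer : IsCoercive B := ⟨β, hβ, fun x => by rw [hBapp]; exact hMcoer x⟩
  set E := hcoer.continuousLinearEquivOfBilin with hEdef
  have hEM : ∀ x : ltwo, E x = M x := by
    intro x
    apply ext_inner_right ℝ
    intro w
    rw [hcoer.continuousLinearEquivOfBilin_apply, hBapp]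
  set Minv : ltwo →L[ℝ] ltwo := (E.symm : ltwo →L[ℝ] ltwo) with hMinvdef
  have hMinvM : ∀ x : ltwo, Minv (M x) = x := by
    intro x; rw [hMinvdef, ← hEM]; exact E.symm_apply_apply x
  have hMMinv : ∀ x : ltwo, M (Minv x) = x := by
    intro x; rw [hMinvdef, ← hEM]; exact E.apply_symm_apply x
  -- norm bound for Minv
  have hMinvNorm : ‖Minv‖ ≤ β⁻¹ := by
    apply ContinuousLinearMap.opNorm_le_bound _ (inv_nonneg.2 hβ.le)
    intro g
    have h1 : β * ‖Minv g‖ * ‖Minv g‖ ≤ ⟪M (Minv g), Minv g⟫ := hMcoer (Minv g)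
    rw [hMMinv] at h1
    have h2 : ⟪g, Minv g⟫ ≤ ‖g‖ * ‖Minv g‖ := real_inner_le_norm _ _
    have h3 : β * ‖Minv g‖ * ‖Minv g‖ ≤ ‖g‖ * ‖Minv g‖ := le_trans h1 h2
    rcases eq_or_lt_of_le (norm_nonneg (Minv g)) with h | h
    · rw [← h]; positivity
    · rw [inv_mul_eq_div, le_div_iff₀ hβ]
      calc ‖Minv g‖ * β = β * ‖Minv g‖ := by ring
        _ ≤ ‖g‖ := by
          have := (mul_le_mul_iff_left₀ h).mp h3
          linarith
  -- norms of P and Q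
  have hPfnorm : ∀ f : ltwo, ‖P f‖ ≤ ‖f‖ := by
    intro f
    have h1 : ⟪P f, P f⟫ = ⟪f, P f⟫ := by rw [hPsa f (P f), hPP]
    have h2 : ⟪f, P f⟫ ≤ ‖f‖ * ‖P f‖ := real_inner_le_norm _ _
    have h3 : ⟪P f, P f⟫ = ‖P f‖ * ‖P f‖ := real_inner_self_eq_norm_mul_norm _
    nlinarith [norm_nonneg f, norm_nonneg (P f)]
  set Q : ltwo →L[ℝ] ltwo := ContinuousLinearMap.id ℝ ltwo - P with hQdef
  have hQapp : ∀ f : ltwo, Q f = f - P f := by intro f; simp [hQdef]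
  have hQP : ∀ f : ltwo, Q (P f) = 0 := by
    intro f; rw [hQapp, hPP, sub_self]
  have hPQ : ∀ f : ltwo, P (Q f) = 0 := by
    intro f; rw [hQapp, map_sub, hPP, sub_self]
  have hQsa : ∀ f g : ltwo, ⟪Q f, g⟫ = ⟪f, Q g⟫ := by
    intro f g
    rw [hQapp, hQapp, inner_sub_left, inner_sub_right, hPsa]
  have hQQ : ∀ f : ltwo, Q (Q f) = Q f := by
    intro f; rw [hQapp (Q f), hPQ, sub_zero]
  have hQfnorm : ∀ f : ltwo, ‖Q f‖ ≤ ‖f‖ := by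
    intro f
    have h1 : ⟪Q f, Q f⟫ = ⟪f, Q f⟫ := by rw [hQsa f (Q f), hQQ]
    have h2 : ⟪f, Q f⟫ ≤ ‖f‖ * ‖Q f‖ := real_inner_le_norm _ _
    have h3 : ⟪Q f, Q f⟫ = ‖Q f‖ * ‖Q f‖ := real_inner_self_eq_norm_mul_norm _
    nlinarith [norm_nonneg f, norm_nonneg (Q f)]
  have hPnorm : ‖P‖ ≤ 1 := ContinuousLinearMap.opNorm_le_bound _ zero_le_one
    (fun f => by rw [one_mul]; exact hPfnorm f)
  have hQnorm : ‖Q‖ ≤ 1 := ContinuousLinearMap.opNorm_le_bound _ zero_le_one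
    (fun f => by rw [one_mul]; exact hQfnorm f)
  -- commutation of P with M and Minv
  have hPM : ∀ x : ltwo, P (M x) = M (P x) := by
    intro x
    rw [hMapp, hMapp, map_add, map_smul, hPP, hPP]
  have hPMinv : ∀ x : ltwo, P (Minv x) = Minv (P x) := by
    intro x
    have hkey : M (P (Minv x)) = P x := by rw [← hPM, hMMinv]
    calc P (Minv x) = Minv (M (P (Minv x))) := (hMinvM _).symm
      _ = Minv (P x) := by rw [hkey]
  -- the inverse
  set Dinv : ltwo →L[ℝ] ltwo :=
    β⁻¹ • Q + Minv.comp (P - β⁻¹ • (P.comp (T.comp Q))) with hDinvdef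
  have hDinvApp : ∀ g : ltwo,
      Dinv g = β⁻¹ • Q g + Minv (P g - β⁻¹ • P (T (Q g))) := by
    intro g; simp [hDinvdef]
  set D : ltwo →L[ℝ] ltwo := β • ContinuousLinearMap.id ℝ ltwo + P.comp T with hDdef
  have hDApp : ∀ x : ltwo, D x = β • x + P (T x) := by intro x; simp [hDdef]
  refine ⟨Dinv, ?_, ?_, ?_⟩
  · -- left inverse
    refine ContinuousLinearMap.ext fun x => ?_
    simp only [ContinuousLinearMap.comp_apply, ContinuousLinearMap.id_apply]
    rw [hDApp, hDinvApp]
    have hQg : Q (β • x + P (T x)) = β • Q x := by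
      rw [map_add, map_smul, hQP, add_zero]
    have hPg : P (β • x + P (T x)) = β • P x + P (T x) := by
      rw [map_add, map_smul, hPP]
    rw [hQg, hPg]
    have hTQ : P (T (β • Q x)) = β • P (T (Q x)) := by simp only [map_smul]
    rw [hTQ, smul_smul, smul_smul, inv_mul_cancel₀ hβ.ne', one_smul, one_smul]
    have harg : β • P x + P (T x) - P (T (Q x)) = M (P x) := by
      rw [hMapp, hPP]
      have : P (T x) - P (T (Q x)) = P (T (P x)) := by
        rw [← map_sub, ← map_sub]
        congr 1
        rw [hQapp, sub_sub_cancel]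
      rw [add_sub_assoc, this]
    rw [harg, hMinvM, hQapp, sub_add_cancel]
  · -- right inverse
    refine ContinuousLinearMap.ext fun g => ?_
    simp only [ContinuousLinearMap.comp_apply, ContinuousLinearMap.id_apply]
    rw [hDinvApp, hDApp]
    set h : ltwo := P g - β⁻¹ • P (T (Q g)) with hhdef
    have hPh : P h = h := by
      rw [hhdef, map_sub, map_smul, hPP, hPP]
    have hPMinvh : P (Minv h) = Minv h := by rw [hPMinv, hPh]
    have hTf : P (T (β⁻¹ • Q g + Minv h)) = β⁻¹ • P (T (Q g)) + P (T (Minv h)) := by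
      simp only [map_add, map_smul]
    rw [smul_add, hTf]
    have hMh : β • Minv h + P (T (Minv h)) = h := by
      have e1 : T (Minv h) = T (P (Minv h)) := by rw [hPMinvh]
      rw [e1, ← hMapp, hMMinv]
    rw [smul_smul, mul_inv_cancel₀ hβ.ne', one_smul]
    calc Q g + β • Minv h + (β⁻¹ • P (T (Q g)) + P (T (Minv h)))
        = Q g + (β • Minv h + P (T (Minv h))) + β⁻¹ • P (T (Q g)) := by abel
      _ = Q g + h + β⁻¹ • P (T (Q g)) := by rw [hMh]
      _ = Q g + P g := by rw [hhdef]; abel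
      _ = g := by rw [hQapp]; abel
  · -- norm bound
    have hT0 : (0:ℝ) ≤ ‖T‖ := norm_nonneg _
    have h1 : ‖Dinv‖ ≤ ‖β⁻¹ • Q‖ + ‖Minv.comp (P - β⁻¹ • (P.comp (T.comp Q)))‖ :=
      norm_add_le _ _
    have h2 : ‖β⁻¹ • Q‖ ≤ β⁻¹ := by
      apply ContinuousLinearMap.opNorm_le_bound _ (inv_nonneg.2 hβ.le)
      intro f
      rw [ContinuousLinearMap.smul_apply, norm_smul, Real.norm_eq_abs,
        abs_of_pos (inv_pos.2 hβ)]
      exact mul_le_mul_of_nonneg_left (hQfnorm f) (inv_nonneg.2 hβ.le)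
    have h3 : ‖P.comp (T.comp Q)‖ ≤ ‖T‖ := by
      calc ‖P.comp (T.comp Q)‖ ≤ ‖P‖ * ‖T.comp Q‖ := ContinuousLinearMap.opNorm_comp_le _ _
        _ ≤ ‖P‖ * (‖T‖ * ‖Q‖) := by
            apply mul_le_mul_of_nonneg_left (ContinuousLinearMap.opNorm_comp_le _ _)
              (norm_nonneg _)
        _ ≤ 1 * (‖T‖ * 1) := by
            apply mul_le_mul hPnorm _ (by positivity) zero_le_one
            exact mul_le_mul_of_nonneg_left hQnorm hT0
        _ = ‖T‖ := by ring
    have h3' : ‖β⁻¹ • (P.comp (T.comp Q))‖ ≤ β⁻¹ * ‖T‖ := by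
      apply ContinuousLinearMap.opNorm_le_bound _ (by positivity)
      intro f
      rw [ContinuousLinearMap.smul_apply, norm_smul, Real.norm_eq_abs,
        abs_of_pos (inv_pos.2 hβ), mul_assoc]
      refine mul_le_mul_of_nonneg_left ?_ (inv_nonneg.2 hβ.le)
      exact le_trans (ContinuousLinearMap.le_opNorm _ f)
        (mul_le_mul_of_nonneg_right h3 (norm_nonneg f))
    have h4 : ‖P - β⁻¹ • (P.comp (T.comp Q))‖ ≤ 1 + β⁻¹ * ‖T‖ := by
      calc ‖P - β⁻¹ • (P.comp (T.comp Q))‖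
          ≤ ‖P‖ + ‖β⁻¹ • (P.comp (T.comp Q))‖ := norm_sub_le _ _
        _ ≤ 1 + β⁻¹ * ‖T‖ := add_le_add hPnorm h3'
    have h5 : ‖Minv.comp (P - β⁻¹ • (P.comp (T.comp Q)))‖ ≤ β⁻¹ * (1 + β⁻¹ * ‖T‖) := by
      calc ‖Minv.comp (P - β⁻¹ • (P.comp (T.comp Q)))‖
          ≤ ‖Minv‖ * ‖P - β⁻¹ • (P.comp (T.comp Q))‖ := ContinuousLinearMap.opNorm_comp_le _ _
        _ ≤ β⁻¹ * (1 + β⁻¹ * ‖T‖) := by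
            apply mul_le_mul hMinvNorm h4 (norm_nonneg _) (inv_nonneg.2 hβ.le)
    calc ‖Dinv‖ ≤ β⁻¹ + β⁻¹ * (1 + β⁻¹ * ‖T‖) := le_trans h1 (add_le_add h2 h5)
      _ = β⁻¹ * (2 + β⁻¹ * ‖T‖) := by ring
end
end
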